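/- Let N ≥ 2 be an integer, α > 0, γ := 1/√α, l > 0, k₁,…,k_N ∈ (0,l), and let B be the N×N real matrix with B_{ii} = −l, B_{i,i−1} = k_i for i = 2,…,N, B_{1,N} = k₁, and zeros elsewhere. Let Γ : [0,1] → ℝ^N be continuous, set Φ_p(x) := −∫₀ˣ (sinh(γ(x−s))/(αγ)) Γ(s) ds, and set M := γ cosh(γ) I − sinh(γ) B (which is invertible). Define Φ(x) := Φ_p(x) + sinh(γx) · M⁻¹ (B Φ_p(1) − Φ_p'(1)). Then Φ is twice continuously differentiable on [0,1] and satisfies −α Φ''(x) + Φ(x) = Γ(x) for all x ∈ [0,1], Φ(0) = 0, and Φ'(1) = B Φ(1). -/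

import Mathlib

open Matrix

/-- The cyclic coupling matrix of the directed-cycle topology. -/
def cycB (N : ℕ) [NeZero N] (l : ℝ) (k : Fin N → ℝ) : Matrix (Fin N) (Fin N) ℝ :=
  fun i j => if j = i then -l else if j = i - 1 then k i else 0

/-- The particular solution `Φ_p(x) = −∫₀ˣ (sinh(γ(x−s))/(αγ)) Γ(s) ds`. -/
noncomputable def Phip (N : ℕ) (a γ : ℝ) (Γ : ℝ → Fin N → ℝ) (x : ℝ) : Fin N → ℝ :=
  -∫ s in (0:ℝ)..x, (Real.sinh (γ * (x - s)) / (a * γ)) • Γ s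

/-- Its derivative `Φ_p'(x) = −∫₀ˣ (cosh(γ(x−s))/α) Γ(s) ds`. -/
noncomputable def Phip' (N : ℕ) (a γ : ℝ) (Γ : ℝ → Fin N → ℝ) (x : ℝ) : Fin N → ℝ :=
  -∫ s in (0:ℝ)..x, (Real.cosh (γ * (x - s)) / a) • Γ s

/-- `M := γ cosh(γ) I − sinh(γ) B`. -/
noncomputable def resMat (N : ℕ) [NeZero N] (l γ : ℝ) (k : Fin N → ℝ) :
    Matrix (Fin N) (Fin N) ℝ :=
  (γ * Real.cosh γ) • (1 : Matrix (Fin N) (Fin N) ℝ) - Real.sinh γ • cycB N l k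

/-- The explicit solution `Φ(x) = Φ_p(x) + sinh(γx) M⁻¹ (BΦ_p(1) − Φ_p'(1))` of the
resolvent boundary value problem `−αΦ'' + Φ = Γ`, `Φ(0) = 0`, `Φ'(1) = BΦ(1)`. -/
noncomputable def resSol (N : ℕ) [NeZero N] (a l γ : ℝ) (k : Fin N → ℝ)
    (Γ : ℝ → Fin N → ℝ) (x : ℝ) : Fin N → ℝ :=
  Phip N a γ Γ x +
    Real.sinh (γ * x) •
      ((resMat N l γ k)⁻¹ *ᵥ (cycB N l k *ᵥ Phip N a γ Γ 1 - Phip' N a γ Γ 1))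

open Set MeasureTheory

lemma ftc_icc {E : Type*} [NormedAddCommGroup E] [NormedSpace ℝ E] [CompleteSpace E]
    {f : ℝ → E} (hf : ContinuousOn f (Icc 0 1)) {x : ℝ} (hx : x ∈ Icc (0:ℝ) 1) :
    HasDerivWithinAt (fun u => ∫ s in (0:ℝ)..u, f s) (f x) (Icc 0 1) x := by
  haveI : Fact (x ∈ Icc (0:ℝ) 1) := ⟨hx⟩
  refine intervalIntegral.integral_hasDerivWithinAt_right ?_
    ⟨Icc 0 1, self_mem_nhdsWithin, hf.aestronglyMeasurable measurableSet_Icc⟩ (hf x hx)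
  exact (hf.mono (by rw [uIcc_of_le hx.1]; exact Icc_subset_Icc_right hx.2)).intervalIntegrable

lemma hasDeriv_sinh_lin (γ x : ℝ) :
    HasDerivAt (fun y => Real.sinh (γ * y)) (γ * Real.cosh (γ * x)) x := by
  have h1 : HasDerivAt (fun y : ℝ => γ * y) γ x := by simpa using (hasDerivAt_id x).const_mul γ
  exact ((Real.hasDerivAt_sinh (γ * x)).comp x h1).congr_deriv (mul_comm _ _)

lemma hasDeriv_cosh_lin (γ x : ℝ) :
    HasDerivAt (fun y => Real.cosh (γ * y)) (γ * Real.sinh (γ * x)) x := by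
  have h1 : HasDerivAt (fun y : ℝ => γ * y) γ x := by simpa using (hasDerivAt_id x).const_mul γ
  exact ((Real.hasDerivAt_cosh (γ * x)).comp x h1).congr_deriv (mul_comm _ _)

lemma unit_resMat (N : ℕ) [NeZero N] (hN : 2 ≤ N) (l γ : ℝ) (hγ : 0 < γ) (hl : 0 < l)
    (k : Fin N → ℝ) (hk : ∀ i, k i ∈ Set.Ioo 0 l) :
    IsUnit (resMat N l γ k) := by
  have hsh : 0 < Real.sinh γ := Real.sinh_pos_iff.2 hγ
  have hch : 0 < Real.cosh γ := Real.cosh_pos γ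
  refine (Matrix.isUnit_iff_isUnit_det _).2 (isUnit_iff_ne_zero.2 ?_)
  refine det_ne_zero_of_sum_row_lt_diag (fun i => ?_)
  have hne : i - 1 ≠ i := by
    intro h
    have h1 := congrArg Fin.val (sub_eq_self.mp h)
    rw [Fin.val_one'] at h1
    simp at h1; omega
  have hdiag : resMat N l γ k i i = γ * Real.cosh γ + Real.sinh γ * l := by
    simp only [resMat, cycB, Matrix.sub_apply, Matrix.smul_apply, Matrix.one_apply_eq,
      smul_eq_mul, if_pos rfl, if_true]
    ring
  have hsum : ∑ j ∈ Finset.univ.erase i, ‖resMat N l γ k i j‖ = Real.sinh γ * k i := by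
    rw [Finset.sum_eq_single_of_mem (i - 1) (Finset.mem_erase.2 ⟨hne, Finset.mem_univ _⟩)]
    · have hne' : ¬ (i = i - 1) := fun h => hne h.symm
      simp only [resMat, cycB, Matrix.sub_apply, Matrix.smul_apply, Matrix.one_apply,
        if_neg hne', smul_eq_mul, mul_zero, zero_sub, if_neg hne, if_pos rfl, if_true,
        Real.norm_eq_abs, abs_neg]
      rw [abs_of_nonneg (mul_nonneg hsh.le (hk i).1.le)]
    · intro j hj hji
      have hji' : j ≠ i := (Finset.mem_erase.1 hj).1
      have hij : ¬ (i = j) := fun h => hji' h.symm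
      simp [resMat, cycB, Matrix.one_apply, hij, hji', hji]
  rw [hsum, hdiag, Real.norm_eq_abs, abs_of_pos (by positivity)]
  nlinarith [(hk i).1, (hk i).2, mul_lt_mul_of_pos_left (hk i).2 hsh]

set_option maxHeartbeats 1000000 in
theorem stmt9 (N : ℕ) [NeZero N] (hN : 2 ≤ N) (a l : ℝ) (ha : 0 < a) (hl : 0 < l)
    (k : Fin N → ℝ) (hk : ∀ i, k i ∈ Set.Ioo 0 l)
    (Γ : ℝ → Fin N → ℝ) (hΓ : ContinuousOn Γ (Set.Icc 0 1)) :
    IsUnit (resMat N l (1 / Real.sqrt a) k) ∧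
    resSol N a l (1 / Real.sqrt a) k Γ 0 = 0 ∧
    ∃ D1 D2 : ℝ → Fin N → ℝ,
      ContinuousOn D1 (Set.Icc 0 1) ∧ ContinuousOn D2 (Set.Icc 0 1) ∧
      (∀ x ∈ Set.Icc (0:ℝ) 1,
          HasDerivWithinAt (resSol N a l (1 / Real.sqrt a) k Γ) (D1 x) (Set.Icc 0 1) x) ∧
      (∀ x ∈ Set.Icc (0:ℝ) 1, HasDerivWithinAt D1 (D2 x) (Set.Icc 0 1) x) ∧
      (∀ x ∈ Set.Icc (0:ℝ) 1,
          -a • D2 x + resSol N a l (1 / Real.sqrt a) k Γ x = Γ x) ∧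
      D1 1 = cycB N l k *ᵥ resSol N a l (1 / Real.sqrt a) k Γ 1 := by
  set γ : ℝ := 1 / Real.sqrt a with hγdef
  have hsq : Real.sqrt a * Real.sqrt a = a := Real.mul_self_sqrt ha.le
  have hsqpos : 0 < Real.sqrt a := Real.sqrt_pos.2 ha
  have hγ : 0 < γ := by rw [hγdef]; positivity
  have haγ : a * γ * γ = 1 := by
    rw [hγdef]; field_simp; rw [Real.sq_sqrt ha.le]
  clear_value γ
  have hU : IsUnit (resMat N l γ k) := unit_resMat N hN l γ hγ hl k hk
  have hUdet : IsUnit (resMat N l γ k).det := (Matrix.isUnit_iff_isUnit_det _).1 hU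
  refine ⟨hU, ?_, ?_⟩
  · simp [resSol, Phip]
  -- set up the pieces
  set c : Fin N → ℝ :=
    (resMat N l γ k)⁻¹ *ᵥ (cycB N l k *ᵥ Phip N a γ Γ 1 - Phip' N a γ Γ 1) with hcdef
  set F : ℝ → Fin N → ℝ := fun u => ∫ s in (0:ℝ)..u, Real.cosh (γ * s) • Γ s with hFdef
  set G : ℝ → Fin N → ℝ := fun u => ∫ s in (0:ℝ)..u, Real.sinh (γ * s) • Γ s with hGdef
  have hcontF : ContinuousOn (fun s => Real.cosh (γ * s) • Γ s) (Icc 0 1) :=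
    ((Real.continuous_cosh.comp (continuous_const.mul continuous_id)).continuousOn).smul hΓ
  have hcontG : ContinuousOn (fun s => Real.sinh (γ * s) • Γ s) (Icc 0 1) :=
    ((Real.continuous_sinh.comp (continuous_const.mul continuous_id)).continuousOn).smul hΓ
  have hsub : ∀ x ∈ Icc (0:ℝ) 1, uIcc (0:ℝ) x ⊆ Icc 0 1 := fun x hx => by
    rw [uIcc_of_le hx.1]; exact Icc_subset_Icc_right hx.2
  have hintF : ∀ x ∈ Icc (0:ℝ) 1,
      IntervalIntegrable (fun s => Real.cosh (γ * s) • Γ s) volume 0 x :=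
    fun x hx => (hcontF.mono (hsub x hx)).intervalIntegrable
  have hintG : ∀ x ∈ Icc (0:ℝ) 1,
      IntervalIntegrable (fun s => Real.sinh (γ * s) • Γ s) volume 0 x :=
    fun x hx => (hcontG.mono (hsub x hx)).intervalIntegrable
  have hFd : ∀ x ∈ Icc (0:ℝ) 1,
      HasDerivWithinAt F (Real.cosh (γ * x) • Γ x) (Icc 0 1) x := by
    intro x hx; rw [hFdef]; exact ftc_icc hcontF hx
  have hGd : ∀ x ∈ Icc (0:ℝ) 1,
      HasDerivWithinAt G (Real.sinh (γ * x) • Γ x) (Icc 0 1) x := by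
    intro x hx; rw [hGdef]; exact ftc_icc hcontG hx
  have hFc : ContinuousOn F (Icc 0 1) := fun x hx => (hFd x hx).continuousWithinAt
  have hGc : ContinuousOn G (Icc 0 1) := fun x hx => (hGd x hx).continuousWithinAt
  -- representation of Phip
  have hPhip : ∀ x ∈ Icc (0:ℝ) 1, Phip N a γ Γ x
      = (1/(a*γ)) • (Real.cosh (γ*x) • G x - Real.sinh (γ*x) • F x) := by
    intro x hx
    have e1 : (fun s => (Real.sinh (γ*(x-s)) / (a*γ)) • Γ s)
        = fun s => (Real.sinh (γ*x) * (1/(a*γ))) • (Real.cosh (γ*s) • Γ s)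
            - (Real.cosh (γ*x) * (1/(a*γ))) • (Real.sinh (γ*s) • Γ s) := by
      funext s
      have hs : Real.sinh (γ*(x-s))
          = Real.sinh (γ*x) * Real.cosh (γ*s) - Real.cosh (γ*x) * Real.sinh (γ*s) := by
        rw [mul_sub, Real.sinh_sub]
      rw [hs, smul_smul, smul_smul, ← sub_smul]
      congr 1
      ring
    have h1 : IntervalIntegrable
        (fun s => (Real.sinh (γ*x) * (1/(a*γ))) • (Real.cosh (γ*s) • Γ s)) volume 0 x :=
      ((hcontF.fun_const_smul _).mono (hsub x hx)).intervalIntegrable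
    have h2 : IntervalIntegrable
        (fun s => (Real.cosh (γ*x) * (1/(a*γ))) • (Real.sinh (γ*s) • Γ s)) volume 0 x :=
      ((hcontG.fun_const_smul _).mono (hsub x hx)).intervalIntegrable
    rw [Phip, e1, intervalIntegral.integral_sub h1 h2, intervalIntegral.integral_smul,
      intervalIntegral.integral_smul]
    simp only [hFdef, hGdef]
    module
  -- representation of Phip'
  have hPhip' : ∀ x ∈ Icc (0:ℝ) 1, Phip' N a γ Γ x
      = (-(1/a)) • (Real.cosh (γ*x) • F x - Real.sinh (γ*x) • G x) := by
    intro x hx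
    have e1 : (fun s => (Real.cosh (γ*(x-s)) / a) • Γ s)
        = fun s => (Real.cosh (γ*x) * (1/a)) • (Real.cosh (γ*s) • Γ s)
            - (Real.sinh (γ*x) * (1/a)) • (Real.sinh (γ*s) • Γ s) := by
      funext s
      have hs : Real.cosh (γ*(x-s))
          = Real.cosh (γ*x) * Real.cosh (γ*s) - Real.sinh (γ*x) * Real.sinh (γ*s) := by
        rw [mul_sub, Real.cosh_sub]
      rw [hs, smul_smul, smul_smul, ← sub_smul]
      congr 1
      ring
    have h1 : IntervalIntegrable
        (fun s => (Real.cosh (γ*x) * (1/a)) • (Real.cosh (γ*s) • Γ s)) volume 0 x :=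
      ((hcontF.fun_const_smul _).mono (hsub x hx)).intervalIntegrable
    have h2 : IntervalIntegrable
        (fun s => (Real.sinh (γ*x) * (1/a)) • (Real.sinh (γ*s) • Γ s)) volume 0 x :=
      ((hcontG.fun_const_smul _).mono (hsub x hx)).intervalIntegrable
    rw [Phip', e1, intervalIntegral.integral_sub h1 h2, intervalIntegral.integral_smul,
      intervalIntegral.integral_smul]
    simp only [hFdef, hGdef]
    module
  -- representation of resSol
  have hRS : ∀ x ∈ Icc (0:ℝ) 1, resSol N a l γ k Γ x
      = (1/(a*γ)) • (Real.cosh (γ*x) • G x - Real.sinh (γ*x) • F x)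
        + Real.sinh (γ*x) • c := by
    intro x hx
    rw [resSol, ← hcdef, hPhip x hx]
  set D1 : ℝ → Fin N → ℝ := fun x =>
    (-(1/a)) • (Real.cosh (γ*x) • F x - Real.sinh (γ*x) • G x)
      + (γ * Real.cosh (γ*x)) • c with hD1def
  set D2 : ℝ → Fin N → ℝ := fun x => (1/a) • (resSol N a l γ k Γ x - Γ x) with hD2def
  have hD1c : ContinuousOn D1 (Icc 0 1) := by
    rw [hD1def]
    refine ContinuousOn.add (ContinuousOn.fun_const_smul (ContinuousOn.fun_sub ?_ ?_) _) ?_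
    · exact ((Real.continuous_cosh.comp (continuous_const.mul continuous_id)).continuousOn).smul hFc
    · exact ((Real.continuous_sinh.comp (continuous_const.mul continuous_id)).continuousOn).smul hGc
    · exact ((continuous_const.mul
        (Real.continuous_cosh.comp (continuous_const.mul continuous_id))).continuousOn).smul
        continuousOn_const
  have hderiv1 : ∀ x ∈ Icc (0:ℝ) 1,
      HasDerivWithinAt (resSol N a l γ k Γ) (D1 x) (Icc 0 1) x := by
    intro x hx
    have hch : HasDerivWithinAt (fun y => Real.cosh (γ*y)) (γ * Real.sinh (γ*x)) (Icc 0 1) x :=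
      (hasDeriv_cosh_lin γ x).hasDerivWithinAt
    have hsh : HasDerivWithinAt (fun y => Real.sinh (γ*y)) (γ * Real.cosh (γ*x)) (Icc 0 1) x :=
      (hasDeriv_sinh_lin γ x).hasDerivWithinAt
    have key := (((hch.smul (hGd x hx)).sub (hsh.smul (hFd x hx))).const_smul
      (1/(a*γ))).add (hsh.smul_const c)
    have heq :
        (1/(a*γ)) • ((Real.cosh (γ*x) • (Real.sinh (γ*x) • Γ x) + (γ * Real.sinh (γ*x)) • G x)
            - (Real.sinh (γ*x) • (Real.cosh (γ*x) • Γ x) + (γ * Real.cosh (γ*x)) • F x))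
          + (γ * Real.cosh (γ*x)) • c = D1 x := by
      rw [hD1def]
      match_scalars <;> (field_simp; try ring)
    rw [heq] at key
    exact key.congr (fun y hy => (hRS y hy)) (hRS x hx)
  have hderiv2 : ∀ x ∈ Icc (0:ℝ) 1, HasDerivWithinAt D1 (D2 x) (Icc 0 1) x := by
    intro x hx
    have hch : HasDerivWithinAt (fun y => Real.cosh (γ*y)) (γ * Real.sinh (γ*x)) (Icc 0 1) x :=
      (hasDeriv_cosh_lin γ x).hasDerivWithinAt
    have hsh : HasDerivWithinAt (fun y => Real.sinh (γ*y)) (γ * Real.cosh (γ*x)) (Icc 0 1) x :=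
      (hasDeriv_sinh_lin γ x).hasDerivWithinAt
    have hch2 : HasDerivWithinAt (fun y => γ * Real.cosh (γ*y)) (γ * (γ * Real.sinh (γ*x)))
        (Icc 0 1) x := hch.const_mul γ
    have key := (((hch.smul (hFd x hx)).sub (hsh.smul (hGd x hx))).const_smul
      (-(1/a))).add (hch2.smul_const c)
    have heq :
        (-(1/a)) • ((Real.cosh (γ*x) • (Real.cosh (γ*x) • Γ x) + (γ * Real.sinh (γ*x)) • F x)
            - (Real.sinh (γ*x) • (Real.sinh (γ*x) • Γ x) + (γ * Real.cosh (γ*x)) • G x))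
          + (γ * (γ * Real.sinh (γ*x))) • c = D2 x := by
      rw [hD2def]
      simp only
      rw [hRS x hx]
      have hcs := Real.cosh_sq_sub_sinh_sq (γ*x)
      match_scalars
      · field_simp
        linear_combination (-1 : ℝ) * hcs
      · field_simp
        linear_combination (-Real.sinh (γ*x)) * haγ
      · field_simp
        linear_combination haγ
      · field_simp
        linear_combination Real.sinh (γ*x) * haγ
    rw [heq] at key
    exact key.congr (fun y hy => rfl) rfl
  refine ⟨D1, D2, hD1c, ?_, hderiv1, hderiv2, ?_, ?_⟩
  · rw [hD2def]
    refine ContinuousOn.fun_const_smul (ContinuousOn.fun_sub ?_ hΓ) _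
    exact fun x hx => (hderiv1 x hx).continuousWithinAt
  · intro x hx
    rw [hD2def]
    simp only
    rw [smul_smul]
    have : -a * (1/a) = -1 := by field_simp
    rw [this]
    module
  · have h1 : (1:ℝ) ∈ Icc (0:ℝ) 1 := by norm_num
    have hMc : resMat N l γ k *ᵥ c = cycB N l k *ᵥ Phip N a γ Γ 1 - Phip' N a γ Γ 1 := by
      rw [hcdef, Matrix.mulVec_mulVec, Matrix.mul_nonsing_inv _ hUdet, Matrix.one_mulVec]
    have hMc2 : resMat N l γ k *ᵥ c
        = (γ * Real.cosh γ) • c - Real.sinh γ • (cycB N l k *ᵥ c) := by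
      rw [resMat, Matrix.sub_mulVec, Matrix.smul_mulVec, Matrix.smul_mulVec,
        Matrix.one_mulVec]
    have hend : (γ * Real.cosh γ) • c - Real.sinh γ • (cycB N l k *ᵥ c)
        = cycB N l k *ᵥ Phip N a γ Γ 1 - Phip' N a γ Γ 1 := by rw [← hMc2, hMc]
    have hres1 : resSol N a l γ k Γ 1 = Phip N a γ Γ 1 + Real.sinh γ • c := by
      rw [resSol, ← hcdef, mul_one]
    rw [hres1, Matrix.mulVec_add, Matrix.mulVec_smul, hD1def]
    simp only [mul_one]
    have hP' := hPhip' 1 h1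
    rw [mul_one] at hP'
    rw [sub_eq_iff_eq_add] at hend
    rw [← hP', hend]
    module
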